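/- arXiv:2410.04143 — 4 statements merged into one kernel-verified Lean document; each statement's English description precedes it below -/
import Mathlib

section
/- Let F : ℝ² → ℝ be a C² cumulative distribution function of a random vector (X₁,X₂) with everywhere positive values on (0,∞)², and suppose ∂²/∂x₁∂x₂ log F(x₁,x₂) > 0 for all (x₁,x₂) ∈ (0,∞)². Then for fixed x₂, the ratio x₁ ↦ F(x₁,x₂)/(F₁(x₁)·F₂(x₂)) is strictly decreasing in x₁ on (0,∞), where F₁(x₁) = lim_{x₂→∞} F(x₁,x₂) and F₂(x₂) = lim_{x₁→∞} F(x₁,x₂) are the marginal cdfs. -/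
open MeasureTheory Filter Set

theorem mtp2_ratio_strict_anti_dim2
    (μ : Measure (ℝ × ℝ)) [IsProbabilityMeasure μ]
    (F : ℝ → ℝ → ℝ) (F₁ F₂ : ℝ → ℝ)
    (hF : ∀ x₁ x₂ : ℝ, F x₁ x₂ = (μ {p : ℝ × ℝ | p.1 ≤ x₁ ∧ p.2 ≤ x₂}).toReal)
    (hC2 : ContDiff ℝ 2 (fun p : ℝ × ℝ => F p.1 p.2))
    (hpos : ∀ x₁ x₂ : ℝ, 0 < x₁ → 0 < x₂ → 0 < F x₁ x₂)
    (hMTP2 : ∀ x₁ x₂ : ℝ, 0 < x₁ → 0 < x₂ →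
      0 < deriv (fun s => deriv (fun t => Real.log (F t s)) x₁) x₂)
    (hF₁ : ∀ x₁ : ℝ, Tendsto (fun x₂ => F x₁ x₂) atTop (nhds (F₁ x₁)))
    (hF₂ : ∀ x₂ : ℝ, Tendsto (fun x₁ => F x₁ x₂) atTop (nhds (F₂ x₂)))
    (x₂ : ℝ) (hx₂ : 0 < x₂) :
    StrictAntiOn (fun x₁ => F x₁ x₂ / (F₁ x₁ * F₂ x₂)) (Set.Ioi (0 : ℝ)) := by
  -- monotonicity of F in each variable
  have hFs : ∀ t : ℝ, Monotone (fun s => F t s) := by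
    intro t s s' hss'
    simp only [hF]
    exact ENNReal.toReal_mono (measure_ne_top _ _)
      (measure_mono fun p hp => ⟨hp.1, hp.2.trans hss'⟩)
  have hFt : ∀ s : ℝ, Monotone (fun t => F t s) := by
    intro s t t' htt'
    simp only [hF]
    exact ENNReal.toReal_mono (measure_ne_top _ _)
      (measure_mono fun p hp => ⟨hp.1.trans htt', hp.2⟩)
  -- differentiability
  have FD : Differentiable ℝ (fun p : ℝ × ℝ => F p.1 p.2) :=
    hC2.differentiable two_ne_zero
  have hdx : ∀ t s : ℝ, DifferentiableAt ℝ (fun u => F u s) t := by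
    intro t s
    exact (FD (t, s)).comp t ((differentiableAt_id (𝕜 := ℝ)).prodMk (differentiableAt_const s))
  have hlog : ∀ t s : ℝ, 0 < t → 0 < s →
      DifferentiableAt ℝ (fun u => Real.log (F u s)) t := by
    intro t s ht hs
    exact (hdx t s).log (ne_of_gt (hpos t s ht hs))
  -- for fixed t > 0, s ↦ ∂₁ log F(t, s) is strictly increasing on (0, ∞)
  have hg : ∀ t : ℝ, 0 < t →
      StrictMonoOn (fun s => deriv (fun u => Real.log (F u s)) t) (Ioi (0:ℝ)) := by
    intro t ht
    apply strictMonoOn_of_deriv_pos (convex_Ioi 0)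
    · intro s hs
      exact (differentiableAt_of_deriv_ne_zero
        (ne_of_gt (hMTP2 t s ht hs))).continuousAt.continuousWithinAt
    · intro s hs
      rw [interior_Ioi] at hs
      exact hMTP2 t s ht hs
  -- key inequality
  have key : ∀ a b s s' : ℝ, 0 < a → a < b → 0 < s → s < s' →
      Real.log (F a s') - Real.log (F a s) < Real.log (F b s') - Real.log (F b s) := by
    intro a b s s' ha hab hs hss'
    have hs' : 0 < s' := hs.trans hss'
    have Hmono : StrictMonoOn (fun t => Real.log (F t s') - Real.log (F t s)) (Ioi (0:ℝ)) := by
      apply strictMonoOn_of_deriv_pos (convex_Ioi 0)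
      · intro t ht
        exact ((hlog t s' ht hs').sub (hlog t s ht hs)).continuousAt.continuousWithinAt
      · intro t ht
        rw [interior_Ioi] at ht
        rw [deriv_fun_sub (hlog t s' ht hs') (hlog t s ht hs)]
        have := hg t ht hs hs' hss'
        simpa using sub_pos.mpr this
    have := Hmono (Set.mem_Ioi.mpr ha) (Set.mem_Ioi.mpr (ha.trans hab)) hab
    simpa using this
  intro a ha b hb hab
  rw [Set.mem_Ioi] at ha hb
  -- positivity facts
  have hFa : 0 < F a x₂ := hpos a x₂ ha hx₂
  have hFb : 0 < F b x₂ := hpos b x₂ hb hx₂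
  have hF1a : 0 < F₁ a :=
    lt_of_lt_of_le hFa (ge_of_tendsto (hF₁ a)
      ((eventually_ge_atTop x₂).mono fun s hs => hFs a hs))
  have hF1b : 0 < F₁ b :=
    lt_of_lt_of_le hFb (ge_of_tendsto (hF₁ b)
      ((eventually_ge_atTop x₂).mono fun s hs => hFs b hs))
  have hF2 : 0 < F₂ x₂ :=
    lt_of_lt_of_le (hpos 1 x₂ one_pos hx₂) (ge_of_tendsto (hF₂ x₂)
      ((eventually_ge_atTop (1:ℝ)).mono fun t htt => hFt x₂ htt))
  -- the limit argument
  set c : ℝ → ℝ := fun s => Real.log (F b s) - Real.log (F a s) with hc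
  have hctend : Tendsto c atTop (nhds (Real.log (F₁ b) - Real.log (F₁ a))) := by
    exact (((Real.continuousAt_log (ne_of_gt hF1b)).tendsto.comp (hF₁ b)).sub
      ((Real.continuousAt_log (ne_of_gt hF1a)).tendsto.comp (hF₁ a)))
  have step1 : c x₂ < c (x₂ + 1) := by
    have := key a b x₂ (x₂ + 1) ha hab hx₂ (by linarith)
    simp only [hc]
    linarith
  have step2 : c (x₂ + 1) ≤ Real.log (F₁ b) - Real.log (F₁ a) := by
    apply ge_of_tendsto hctend
    filter_upwards [eventually_ge_atTop (x₂ + 1)] with s hs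
    rcases eq_or_lt_of_le hs with h | h
    · rw [← h]
    · have := key a b (x₂ + 1) s ha hab (by linarith) h
      simp only [hc]
      linarith
  have hkey : Real.log (F b x₂) - Real.log (F a x₂) < Real.log (F₁ b) - Real.log (F₁ a) := by
    have : c x₂ < Real.log (F₁ b) - Real.log (F₁ a) := lt_of_lt_of_le step1 step2
    simpa [hc] using this
  have hmul : F b x₂ * F₁ a < F a x₂ * F₁ b := by
    have h1 : Real.log (F b x₂ * F₁ a) < Real.log (F a x₂ * F₁ b) := by
      rw [Real.log_mul (ne_of_gt hFb) (ne_of_gt hF1a),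
        Real.log_mul (ne_of_gt hFa) (ne_of_gt hF1b)]
      linarith
    have := Real.exp_lt_exp.mpr h1
    rwa [Real.exp_log (by positivity), Real.exp_log (by positivity)] at this
  show F b x₂ / (F₁ b * F₂ x₂) < F a x₂ / (F₁ a * F₂ x₂)
  rw [div_lt_div_iff₀ (by positivity) (by positivity)]
  nlinarith [mul_lt_mul_of_pos_right hmul hF2]
end

section
/- Let F : ℝⁿ → ℝ be a C² strict MTP₂ cumulative distribution function, i.e. ∂²/∂xᵢ∂xⱼ log F(x) > 0 for all i ≠ j and all x, with F(x) > 0 everywhere. For events Aᵢ = {Xᵢ ≤ xᵢ} and any nonempty proper subset I ⊂ {1,…,n}, the ratio P(∩_{i=1}^n Aᵢ) / ( P(∩_{i∈I} Aᵢ) · P(∩_{i∉I} Aᵢ) ) is strictly decreasing in each coordinate xᵢ. -/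
open MeasureTheory Filter Set
open Topology


lemma mtp2_aux_mono {α : Type*} [DecidableEq α] (f : (α → ℝ) → ℝ) :
    ∀ (s : Finset α), (∀ j ∈ s, ∀ z : α → ℝ, Monotone fun a => f (Function.update z j a)) →
    ∀ z z' : α → ℝ, (∀ k, z k ≤ z' k) → (∀ k, k ∉ s → z k = z' k) → f z ≤ f z' := by
  intro s
  induction s using Finset.induction_on with
  | empty =>
    intro _ z z' _ h2
    have : z = z' := funext fun k => h2 k (Finset.notMem_empty k)
    simp [this]
  | @insert j s hjs ih =>
    intro h z z' hle hoff
    set w := Function.update z j (z' j) with hw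
    have h1 : f z ≤ f w := by
      have := (h j (Finset.mem_insert_self j s) z) (hle j)
      simpa [Function.update_eq_self, hw] using this
    refine h1.trans (ih (fun k hk z => h k (Finset.mem_insert_of_mem hk) z) w z' ?_ ?_)
    · intro k
      rcases eq_or_ne k j with rfl | hkj
      · simp [hw]
      · simpa [hw, Function.update_of_ne hkj] using hle k
    · intro k hk
      rcases eq_or_ne k j with rfl | hkj
      · simp [hw]
      · rw [hw, Function.update_of_ne hkj]
        exact hoff k (by simp [Finset.mem_insert, hkj, hk])

lemma mtp2_aux_strict {α : Type*} [DecidableEq α] (f : (α → ℝ) → ℝ) (s : Finset α)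
    (h : ∀ j ∈ s, ∀ z : α → ℝ, StrictMono fun a => f (Function.update z j a))
    (z z' : α → ℝ) (hle : ∀ k, z k ≤ z' k) (hoff : ∀ k, k ∉ s → z k = z' k)
    (j : α) (hj : j ∈ s) (hlt : z j < z' j) : f z < f z' := by
  set w := Function.update z j (z' j) with hw
  have h1 : f z < f w := by
    have := (h j hj z) hlt
    simpa [Function.update_eq_self, hw] using this
  refine h1.trans_le (mtp2_aux_mono f s (fun k hk z => (h k hk z).monotone) w z' ?_ ?_)
  · intro k
    rcases eq_or_ne k j with rfl | hkj
    · simp [hw]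
    · simpa [hw, Function.update_of_ne hkj] using hle k
  · intro k hk
    have hkj : k ≠ j := fun e => hk (e ▸ hj)
    rw [hw, Function.update_of_ne hkj]
    exact hoff k hk


section
variable {n : ℕ} {F : (Fin n → ℝ) → ℝ}

lemma mtp2_shift
    (hMTP2 : ∀ x : Fin n → ℝ, ∀ i j : Fin n, i ≠ j →
      0 < deriv (fun s => deriv
            (fun t => Real.log (F (Function.update (Function.update x j s) i t)))
            (x i)) (x j))
    (z : Fin n → ℝ) {i j : Fin n} (hij : i ≠ j) (s₀ t₀ : ℝ) :
    0 < deriv (fun s => deriv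
        (fun t => Real.log (F (Function.update (Function.update z j s) i t))) t₀) s₀ := by
  have h := hMTP2 (Function.update (Function.update z j s₀) i t₀) i j hij
  have e1 : (Function.update (Function.update z j s₀) i t₀) i = t₀ := by simp
  have e2 : (Function.update (Function.update z j s₀) i t₀) j = s₀ := by
    rw [Function.update_of_ne hij.symm, Function.update_self]
  have e3 : ∀ s t : ℝ, Function.update (Function.update
      (Function.update (Function.update z j s₀) i t₀) j s) i t
      = Function.update (Function.update z j s) i t := by
    intro s t; funext k
    rcases eq_or_ne k i with rfl | hki
    · simp
    · rcases eq_or_ne k j with rfl | hkj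
      · simp [Function.update_of_ne hki, Function.update_self]
      · simp [Function.update_of_ne hki, Function.update_of_ne hkj]
  rw [e1, e2] at h
  simp only [e3] at h
  exact h

lemma mtp2_diff_log (hC2 : ContDiff ℝ 2 F) (hpos : ∀ x, 0 < F x) (w : Fin n → ℝ) (i : Fin n) :
    Differentiable ℝ (fun t => Real.log (F (Function.update w i t))) := by
  intro τ
  have hu : DifferentiableAt ℝ (fun t : ℝ => Function.update w i t) τ :=
    (hasDerivAt_update w i τ).differentiableAt
  have h1 : DifferentiableAt ℝ F (Function.update w i τ) :=
    (hC2.differentiable two_ne_zero).differentiableAt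
  exact (Real.differentiableAt_log (hpos _).ne').comp τ (h1.comp τ hu)

lemma mtp2_claimA (hC2 : ContDiff ℝ 2 F) (hpos : ∀ x, 0 < F x)
    (hMTP2 : ∀ x : Fin n → ℝ, ∀ i j : Fin n, i ≠ j →
      0 < deriv (fun s => deriv
            (fun t => Real.log (F (Function.update (Function.update x j s) i t)))
            (x i)) (x j))
    (z : Fin n → ℝ) {i j : Fin n} (hij : i ≠ j) {t t' : ℝ} (htt : t < t') :
    StrictMono (fun a => Real.log (F (Function.update (Function.update z j a) i t'))
      - Real.log (F (Function.update (Function.update z j a) i t))) := by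
  intro a a' haa
  have hH : StrictMono (fun τ => Real.log (F (Function.update (Function.update z j a') i τ))
      - Real.log (F (Function.update (Function.update z j a) i τ))) := by
    apply strictMono_of_deriv_pos
    intro τ
    rw [deriv_fun_sub (mtp2_diff_log hC2 hpos _ i τ) (mtp2_diff_log hC2 hpos _ i τ)]
    have hD : StrictMono (fun s => deriv
        (fun u => Real.log (F (Function.update (Function.update z j s) i u))) τ) :=
      strictMono_of_deriv_pos (fun s₀ => mtp2_shift hMTP2 z hij s₀ τ)
    exact sub_pos.2 (hD haa)
  have h2 := hH htt
  simp only at h2 ⊢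
  linarith
end


lemma mtp2_marginal_limit {n : ℕ} (μ : Measure (Fin n → ℝ)) [IsProbabilityMeasure μ]
    (F : (Fin n → ℝ) → ℝ)
    (hF : ∀ x : Fin n → ℝ, F x = (μ {y | ∀ i, y i ≤ x i}).toReal)
    (J : Finset (Fin n)) (v : Fin n → ℝ) :
    Tendsto (fun m : ℕ => F (fun k => if k ∈ J then v k else (m : ℝ))) atTop
      (𝓝 ((μ {y | ∀ k ∈ J, y k ≤ v k}).toReal)) := by
  set S : ℕ → Set (Fin n → ℝ) :=
    fun m => {y | ∀ k, y k ≤ (fun k => if k ∈ J then v k else (m : ℝ)) k} with hS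
  have hmono : Monotone S := by
    intro m m' hmm y hy k
    refine le_trans (hy k) ?_
    by_cases hk : k ∈ J
    · simp [hk]
    · simp only [hk, if_false]
      exact_mod_cast hmm
  have hU : ⋃ m, S m = {y | ∀ k ∈ J, y k ≤ v k} := by
    ext y
    simp only [hS, mem_iUnion, mem_setOf_eq]
    constructor
    · rintro ⟨m, hm⟩ k hk
      simpa [hk] using hm k
    · intro hy
      obtain ⟨m, hm⟩ : ∃ m : ℕ, ∀ k, y k ≤ m := by
        rcases isEmpty_or_nonempty (Fin n) with h | h
        · exact ⟨0, fun k => isEmptyElim k⟩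
        · obtain ⟨m, hm⟩ := exists_nat_ge (Finset.univ.sup' Finset.univ_nonempty y)
          exact ⟨m, fun k => le_trans (Finset.le_sup' y (Finset.mem_univ k)) hm⟩
      refine ⟨m, fun k => ?_⟩
      by_cases hk : k ∈ J
      · simpa [hk] using hy k hk
      · simpa [hk] using hm k
  have h1 : Tendsto (fun m => μ (S m)) atTop (𝓝 (μ (⋃ m, S m))) :=
    tendsto_measure_iUnion_atTop hmono
  rw [hU] at h1
  have h2 := (ENNReal.tendsto_toReal (measure_ne_top μ _)).comp h1
  exact h2.congr (fun m => (hF _).symm)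

lemma mtp2_key {n : ℕ} (μ : Measure (Fin n → ℝ)) [IsProbabilityMeasure μ]
    (F : (Fin n → ℝ) → ℝ)
    (hF : ∀ x : Fin n → ℝ, F x = (μ {y | ∀ i, y i ≤ x i}).toReal)
    (hC2 : ContDiff ℝ 2 F) (hpos : ∀ x, 0 < F x)
    (hMTP2 : ∀ x : Fin n → ℝ, ∀ i j : Fin n, i ≠ j →
      0 < deriv (fun s => deriv
            (fun t => Real.log (F (Function.update (Function.update x j s) i t)))
            (x i)) (x j))
    (J : Finset (Fin n)) (hJ : J ≠ Finset.univ) {i : Fin n} (hiJ : i ∈ J)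
    (x : Fin n → ℝ) {t t' : ℝ} (htt : t < t') :
    F (Function.update x i t') * (μ {y | ∀ k ∈ J, y k ≤ Function.update x i t k}).toReal <
      F (Function.update x i t) * (μ {y | ∀ k ∈ J, y k ≤ Function.update x i t' k}).toReal := by
  classical
  set M : ℝ := (μ {y | ∀ k ∈ J, y k ≤ Function.update x i t k}).toReal with hM
  set M' : ℝ := (μ {y | ∀ k ∈ J, y k ≤ Function.update x i t' k}).toReal with hM'
  -- positivity
  have hsub : ∀ τ : ℝ, {y : Fin n → ℝ | ∀ k, y k ≤ Function.update x i τ k} ⊆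
      {y | ∀ k ∈ J, y k ≤ Function.update x i τ k} := fun τ y hy k _ => hy k
  have hMpos : 0 < M := lt_of_lt_of_le (hpos (Function.update x i t)) (by
    rw [hF]
    exact ENNReal.toReal_mono (measure_ne_top μ _) (measure_mono (hsub t)))
  have hM'pos : 0 < M' := lt_of_lt_of_le (hpos (Function.update x i t')) (by
    rw [hF]
    exact ENNReal.toReal_mono (measure_ne_top μ _) (measure_mono (hsub t')))
  -- the sequence of base points
  set zf : ℕ → (Fin n → ℝ) := fun m k => if k ∈ J then x k else (m : ℝ) with hzf
  have hwz : ∀ (m : ℕ) (τ : ℝ),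
      (fun k => if k ∈ J then Function.update x i τ k else (m : ℝ))
        = Function.update (zf m) i τ := by
    intro m τ; funext k
    rcases eq_or_ne k i with rfl | hki
    · simp [hiJ]
    · by_cases hk : k ∈ J <;>
        simp [hk, Function.update_of_ne hki, hzf]
  -- G function
  set G : (Fin n → ℝ) → ℝ := fun z =>
    Real.log (F (Function.update z i t')) - Real.log (F (Function.update z i t)) with hG
  -- limit of G along zf
  have hlim : Tendsto (fun m : ℕ => G (zf m)) atTop (𝓝 (Real.log M' - Real.log M)) := by
    have l1 := mtp2_marginal_limit μ F hF J (Function.update x i t)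
    have l2 := mtp2_marginal_limit μ F hF J (Function.update x i t')
    have l1' := ((Real.continuousAt_log hMpos.ne').tendsto.comp l1)
    have l2' := ((Real.continuousAt_log hM'pos.ne').tendsto.comp l2)
    have := l2'.sub l1'
    refine this.congr (fun m => ?_)
    simp only [Function.comp, hG, hwz]
  -- strict monotonicity of G in each coordinate of Jᶜ
  have hstrict : ∀ j ∈ Jᶜ, ∀ z : Fin n → ℝ,
      StrictMono fun a => G (Function.update z j a) := by
    intro j hj z
    have hij : i ≠ j := fun e => (Finset.mem_compl.1 hj) (e ▸ hiJ)
    exact mtp2_claimA hC2 hpos hMTP2 z hij htt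
  -- pick m₀ beyond all coordinates of x
  have hne : (Finset.univ : Finset (Fin n)).Nonempty := ⟨i, Finset.mem_univ i⟩
  obtain ⟨m₀, hm₀⟩ := exists_nat_gt (Finset.univ.sup' hne x)
  have hm₀k : ∀ k, x k < m₀ := fun k =>
    lt_of_le_of_lt (Finset.le_sup' x (Finset.mem_univ k)) hm₀
  -- j₀ outside J
  obtain ⟨j₀, hj₀⟩ : ∃ j, j ∉ J := by
    by_contra h
    push_neg at h
    exact hJ (Finset.eq_univ_iff_forall.2 h)
  -- G x < G (zf m₀)
  have hstep : G x < G (zf m₀) := by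
    refine mtp2_aux_strict G Jᶜ hstrict x (zf m₀) ?_ ?_ j₀ (Finset.mem_compl.2 hj₀) ?_
    · intro k
      by_cases hk : k ∈ J
      · simp [hzf, hk]
      · simp only [hzf, hk, if_false]
        exact (hm₀k k).le
    · intro k hk
      have hk' : k ∈ J := by simpa using hk
      simp [hzf, hk']
    · simpa [hzf, hj₀] using hm₀k j₀
  -- G (zf m₀) ≤ G (zf m) for m ≥ m₀
  have hmonoseq : ∀ m, m₀ ≤ m → G (zf m₀) ≤ G (zf m) := by
    intro m hm
    refine mtp2_aux_mono G Jᶜ (fun j hj z => (hstrict j hj z).monotone) _ _ ?_ ?_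
    · intro k
      by_cases hk : k ∈ J
      · simp [hzf, hk]
      · simp only [hzf, hk, if_false]
        exact_mod_cast hm
    · intro k hk
      have hk' : k ∈ J := by simpa using hk
      simp [hzf, hk']
  have hle : G (zf m₀) ≤ Real.log M' - Real.log M :=
    ge_of_tendsto hlim (eventually_atTop.2 ⟨m₀, hmonoseq⟩)
  have hkey : Real.log (F (Function.update x i t')) - Real.log (F (Function.update x i t))
      < Real.log M' - Real.log M := lt_of_lt_of_le hstep hle
  have hfin : Real.log (F (Function.update x i t') * M) <
      Real.log (F (Function.update x i t) * M') := by
    rw [Real.log_mul (hpos _).ne' hMpos.ne', Real.log_mul (hpos _).ne' hM'pos.ne']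
    linarith
  exact (Real.log_lt_log_iff (mul_pos (hpos _) hMpos) (mul_pos (hpos _) hM'pos)).1 hfin

theorem mtp2_ratio_strict_anti
    (n : ℕ) (μ : Measure (Fin n → ℝ)) [IsProbabilityMeasure μ]
    (F : (Fin n → ℝ) → ℝ)
    (hF : ∀ x : Fin n → ℝ, F x = (μ {y | ∀ i, y i ≤ x i}).toReal)
    (hC2 : ContDiff ℝ 2 F)
    (hpos : ∀ x, 0 < F x)
    (hMTP2 : ∀ x : Fin n → ℝ, ∀ i j : Fin n, i ≠ j →
      0 < deriv (fun s => deriv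
            (fun t => Real.log (F (Function.update (Function.update x j s) i t)))
            (x i)) (x j))
    (I : Finset (Fin n)) (hI : I.Nonempty) (hIp : I ≠ Finset.univ)
    (x : Fin n → ℝ) (i : Fin n) :
    StrictAnti (fun t : ℝ =>
      F (Function.update x i t) /
        ((μ {y | ∀ k ∈ I, y k ≤ Function.update x i t k}).toReal *
         (μ {y | ∀ k, k ∉ I → y k ≤ Function.update x i t k}).toReal)) := by
  classical
  intro t t' htt
  simp only
  have hApos : ∀ τ : ℝ, 0 < (μ {y | ∀ k ∈ I, y k ≤ Function.update x i τ k}).toReal := by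
    intro τ
    refine lt_of_lt_of_le (hpos (Function.update x i τ)) ?_
    rw [hF]
    exact ENNReal.toReal_mono (measure_ne_top μ _)
      (measure_mono (fun y hy k _ => hy k))
  have hBpos : ∀ τ : ℝ,
      0 < (μ {y | ∀ k, k ∉ I → y k ≤ Function.update x i τ k}).toReal := by
    intro τ
    refine lt_of_lt_of_le (hpos (Function.update x i τ)) ?_
    rw [hF]
    exact ENNReal.toReal_mono (measure_ne_top μ _)
      (measure_mono (fun y hy k _ => hy k))
  rw [div_lt_div_iff₀ (mul_pos (hApos t') (hBpos t')) (mul_pos (hApos t) (hBpos t))]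
  by_cases hiI : i ∈ I
  · have hBconst : {y : Fin n → ℝ | ∀ k, k ∉ I → y k ≤ Function.update x i t' k}
        = {y | ∀ k, k ∉ I → y k ≤ Function.update x i t k} := by
      apply Set.ext; intro y
      refine forall_congr' fun k => ?_
      refine imp_congr_right fun hk => ?_
      have hki : k ≠ i := fun e => hk (e ▸ hiI)
      rw [Function.update_of_ne hki, Function.update_of_ne hki]
    rw [hBconst]
    have key := mtp2_key μ F hF hC2 hpos hMTP2 I hIp hiI x htt
    nlinarith [mul_lt_mul_of_pos_right key (hBpos t)]
  · have hJ : Iᶜ ≠ Finset.univ := by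
      intro h
      obtain ⟨k, hk⟩ := hI
      have : k ∈ Iᶜ := h ▸ Finset.mem_univ k
      exact (Finset.mem_compl.1 this) hk
    have hset : ∀ τ : ℝ, {y : Fin n → ℝ | ∀ k ∈ Iᶜ, y k ≤ Function.update x i τ k}
        = {y | ∀ k, k ∉ I → y k ≤ Function.update x i τ k} := by
      intro τ; apply Set.ext; intro y
      simp [Finset.mem_compl]
    have hAconst : {y : Fin n → ℝ | ∀ k ∈ I, y k ≤ Function.update x i t' k}
        = {y | ∀ k ∈ I, y k ≤ Function.update x i t k} := by
      apply Set.ext; intro y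
      refine forall_congr' fun k => ?_
      refine imp_congr_right fun hk => ?_
      have hki : k ≠ i := fun e => hiI (e ▸ hk)
      rw [Function.update_of_ne hki, Function.update_of_ne hki]
    rw [hAconst]
    have key := mtp2_key μ F hF hC2 hpos hMTP2 Iᶜ hJ (Finset.mem_compl.2 hiI) x htt
    rw [hset t, hset t'] at key
    nlinarith [mul_lt_mul_of_pos_right key (hApos t)]
end

section
/- Let F : ℝⁿ → ℝ be a C² strict MTP₂ cdf with everywhere positive values. Fix a nonempty proper subset I ⊂ {1,…,n}, write x = (x₁, x₂) with x₁ the coordinates in I, and let F₁, F₂ be the corresponding marginal cdfs. Then for all x ≤ b (componentwise), F(x) ≥ r(b) · F₁(x₁) · F₂(x₂), where r(b) = F(b)/(F₁(b₁)·F₂(b₂)). -/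
open MeasureTheory Filter Set

section MTP2Aux

open Function Topology

variable {n : ℕ}

noncomputable def MTP2Aux.pd (f : (Fin n → ℝ) → ℝ) (i : Fin n) (w : Fin n → ℝ) : ℝ :=
  fderiv ℝ f w (Pi.single i 1)

namespace MTP2Aux

lemma hasDerivAt_update_curve (w : Fin n → ℝ) (i : Fin n) (t : ℝ) :
    HasDerivAt (fun s : ℝ => Function.update w i s) (Pi.single i 1 : Fin n → ℝ) t := by
  have h : (fun s : ℝ => Function.update w i s)
      = fun s : ℝ => w + (s - w i) • (Pi.single i 1 : Fin n → ℝ) := by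
    funext s; ext j
    by_cases hj : j = i
    · subst hj; simp
    · simp [Function.update_of_ne hj, Pi.single_apply, hj]
  rw [h]
  simpa using (((hasDerivAt_id t).sub_const (w i)).smul_const
    (Pi.single i 1 : Fin n → ℝ)).const_add w

lemma hasDerivAt_slice {f : (Fin n → ℝ) → ℝ} (hf : Differentiable ℝ f)
    (w : Fin n → ℝ) (i : Fin n) (t : ℝ) :
    HasDerivAt (fun s => f (Function.update w i s)) (pd f i (Function.update w i t)) t :=
  (hf (Function.update w i t)).hasFDerivAt.comp_hasDerivAt t (hasDerivAt_update_curve w i t)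

/-- The partial derivative `pd f i` is strictly monotone in each other coordinate. -/
lemma pd_strictMono {f : (Fin n → ℝ) → ℝ} (hfd : Differentiable ℝ f)
    (hm : ∀ x : Fin n → ℝ, ∀ i j : Fin n, i ≠ j →
      0 < deriv (fun s => deriv
            (fun t => f (Function.update (Function.update x j s) i t)) (x i)) (x j))
    (i j : Fin n) (hij : i ≠ j) (w : Fin n → ℝ) :
    StrictMono (fun s => pd f i (Function.update w j s)) := by
  have h1 : ∀ s : ℝ,
      deriv (fun t => f (Function.update (Function.update w j s) i t)) (w i)
        = pd f i (Function.update w j s) := by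
    intro s
    have h := (hasDerivAt_slice hfd (Function.update w j s) i (w i)).deriv
    rw [h]
    congr 1
    have hwi : (Function.update w j s) i = w i := Function.update_of_ne hij _ _
    rw [← hwi, Function.update_eq_self]
  apply strictMono_of_deriv_pos
  intro s₀
  have key := hm (Function.update w j s₀) i j hij
  simp only [Function.update_idem, Function.update_self,
    Function.update_of_ne hij] at key
  simp only [h1] at key
  exact key

/-- Increments of `f` along coordinate `i` are monotone in each other coordinate `j`. -/
lemma delta_slice_monotone {f : (Fin n → ℝ) → ℝ} (hfd : Differentiable ℝ f)
    (hpd : ∀ (w : Fin n → ℝ) (i j : Fin n), i ≠ j →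
      StrictMono (fun s => pd f i (Function.update w j s)))
    {i j : Fin n} (hij : i ≠ j) {a a' : ℝ} (haa : a ≤ a') (w : Fin n → ℝ) :
    Monotone (fun s => f (Function.update (Function.update w j s) i a')
      - f (Function.update (Function.update w j s) i a)) := by
  have hfun : ∀ c : ℝ, (fun s => f (Function.update (Function.update w j s) i c))
      = fun s => f (Function.update (Function.update w i c) j s) := by
    intro c; funext s; rw [Function.update_comm hij]
  have H : ∀ (c : ℝ) (s : ℝ),
      HasDerivAt (fun s => f (Function.update (Function.update w j s) i c))
        (pd f j (Function.update (Function.update w i c) j s)) s := by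
    intro c s
    rw [hfun c]
    exact hasDerivAt_slice hfd _ j s
  have hdiff : Differentiable ℝ (fun s => f (Function.update (Function.update w j s) i a')
      - f (Function.update (Function.update w j s) i a)) :=
    fun s => ((H a' s).sub (H a s)).differentiableAt
  apply monotone_of_deriv_nonneg hdiff
  intro s
  rw [(show HasDerivAt (fun s => f (Function.update (Function.update w j s) i a')
      - f (Function.update (Function.update w j s) i a)) _ s from (H a' s).sub (H a s)).deriv]
  have hcomm : ∀ c : ℝ, Function.update (Function.update w i c) j s
      = Function.update (Function.update w j s) i c := by
    intro c; rw [Function.update_comm hij]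
  rw [hcomm, hcomm]
  have := (hpd (Function.update w j s) j i hij.symm).monotone haa
  simpa using sub_nonneg.mpr this

/-- Increments of `f` along coordinate `i` are monotone with respect to the full
componentwise order. -/
lemma delta_monotone {f : (Fin n → ℝ) → ℝ}
    (hds : ∀ {i j : Fin n}, i ≠ j → ∀ {a a' : ℝ}, a ≤ a' → ∀ w : Fin n → ℝ,
      Monotone (fun s => f (Function.update (Function.update w j s) i a')
        - f (Function.update (Function.update w j s) i a)))
    (i : Fin n) {a a' : ℝ} (haa : a ≤ a') {w w' : Fin n → ℝ} (hww : w ≤ w') :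
    f (Function.update w i a') - f (Function.update w i a)
      ≤ f (Function.update w' i a') - f (Function.update w' i a) := by
  classical
  have key : ∀ S : Finset (Fin n),
      f (Function.update w i a') - f (Function.update w i a)
        ≤ f (Function.update (S.piecewise w' w) i a')
          - f (Function.update (S.piecewise w' w) i a) := by
    intro S
    induction S using Finset.induction_on with
    | empty => simp
    | @insert j S hjS ih =>
      refine ih.trans ?_
      rw [Finset.piecewise_insert]
      set v := S.piecewise w' w with hv
      by_cases hji : j = i
      · subst hji
        simp [Function.update_idem]
      · have hmono := hds (Ne.symm hji) haa v
        have hle : v j ≤ w' j := by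
          by_cases hjS' : j ∈ S
          · simp [hv, Finset.piecewise_eq_of_mem _ _ _ hjS']
          · simp only [hv, Finset.piecewise_eq_of_notMem _ _ _ hjS']
            exact hww j
        have := hmono hle
        simpa [Function.update_eq_self] using this
  have h := key Finset.univ
  rwa [Finset.piecewise_univ] at h

/-- Block supermodularity. -/
lemma block_supermodular {f : (Fin n → ℝ) → ℝ}
    (hdm : ∀ (i : Fin n) {a a' : ℝ}, a ≤ a' → ∀ {w w' : Fin n → ℝ}, w ≤ w' →
      f (Function.update w i a') - f (Function.update w i a)
        ≤ f (Function.update w' i a') - f (Function.update w' i a))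
    (I : Finset (Fin n)) {x y : Fin n → ℝ} (hxy : x ≤ y) :
    f (I.piecewise x y) + f (I.piecewise y x) ≤ f x + f y := by
  classical
  set u := I.piecewise x y with hu
  have key : ∀ S : Finset (Fin n), S ⊆ I →
      f (S.piecewise y x) - f x ≤ f (S.piecewise y u) - f u := by
    intro S
    induction S using Finset.induction_on with
    | empty => simp
    | @insert j S hjS ih =>
      intro hins
      have hjI : j ∈ I := hins (Finset.mem_insert_self j S)
      have hSI : S ⊆ I := fun k hk => hins (Finset.mem_insert_of_mem hk)
      have ih' := ih hSI
      rw [Finset.piecewise_insert, Finset.piecewise_insert]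
      set A := S.piecewise y u with hA
      set B := S.piecewise y x with hB
      have hBA : B ≤ A := by
        intro k
        by_cases hkS : k ∈ S
        · simp [hA, hB, Finset.piecewise_eq_of_mem _ _ _ hkS]
        · simp only [hA, hB, Finset.piecewise_eq_of_notMem _ _ _ hkS]
          by_cases hkI : k ∈ I
          · simp [hu, Finset.piecewise_eq_of_mem _ _ _ hkI]
          · simp [hu, Finset.piecewise_eq_of_notMem _ _ _ hkI]
            exact hxy k
      have step := hdm j (hxy j) hBA
      have hBj : B j = x j := by simp [hB, Finset.piecewise_eq_of_notMem _ _ _ hjS]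
      have hAj : A j = x j := by
        simp [hA, Finset.piecewise_eq_of_notMem _ _ _ hjS, hu,
          Finset.piecewise_eq_of_mem _ _ _ hjI]
      have eB : Function.update B j (x j) = B := by rw [← hBj, Function.update_eq_self]
      have eA : Function.update A j (x j) = A := by rw [← hAj, Function.update_eq_self]
      rw [eB, eA] at step
      linarith
  have h := key I (le_refl I)
  have hIy : I.piecewise y u = y := by
    funext k
    by_cases hkI : k ∈ I
    · simp [Finset.piecewise_eq_of_mem _ _ _ hkI]
    · simp [Finset.piecewise_eq_of_notMem _ _ _ hkI, hu]
  rw [hIy] at h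
  linarith

lemma tendsto_marginal (μ : Measure (Fin n → ℝ)) [IsFiniteMeasure μ]
    (P : Fin n → Prop) [DecidablePred P] (x : Fin n → ℝ) :
    Tendsto (fun M : ℝ => (μ {y | ∀ i, y i ≤ if P i then x i else M}).toReal) atTop
      (𝓝 ((μ {y | ∀ k, P k → y k ≤ x k}).toReal)) := by
  set s : ℝ → Set (Fin n → ℝ) := fun M => {y | ∀ i, y i ≤ if P i then x i else M} with hs
  have hmono : Monotone s := by
    intro M M' hMM y hy i
    refine (hy i).trans ?_
    by_cases hPi : P i
    · simp [hPi]
    · simp [hPi, hMM]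
  have hunion : ⋃ M, s M = {y | ∀ k, P k → y k ≤ x k} := by
    ext y
    simp only [mem_iUnion, mem_setOf_eq, hs]
    constructor
    · rintro ⟨M, hM⟩ k hk
      have := hM k
      rwa [if_pos hk] at this
    · intro hy
      obtain ⟨M, hM⟩ := Finite.exists_le y
      refine ⟨M, fun i => ?_⟩
      by_cases hPi : P i
      · rw [if_pos hPi]; exact hy i hPi
      · rw [if_neg hPi]; exact hM i
  have h1 : Tendsto (fun M => μ (s M)) atTop (𝓝 (μ (⋃ M, s M))) :=
    tendsto_measure_iUnion_atTop hmono
  rw [hunion] at h1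
  exact (ENNReal.tendsto_toReal (measure_ne_top μ _)).comp h1

end MTP2Aux

end MTP2Aux

open Topology in
theorem mtp2_cdf_lower_bound
    (n : ℕ) (μ : Measure (Fin n → ℝ)) [IsProbabilityMeasure μ]
    (F : (Fin n → ℝ) → ℝ)
    (hF : ∀ x : Fin n → ℝ, F x = (μ {y | ∀ i, y i ≤ x i}).toReal)
    (hC2 : ContDiff ℝ 2 F)
    (hpos : ∀ x, 0 < F x)
    (hMTP2 : ∀ x : Fin n → ℝ, ∀ i j : Fin n, i ≠ j →
      0 < deriv (fun s => deriv
            (fun t => Real.log (F (Function.update (Function.update x j s) i t)))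
            (x i)) (x j))
    (I : Finset (Fin n)) (hI : I.Nonempty) (hIp : I ≠ Finset.univ)
    (F₁ F₂ : (Fin n → ℝ) → ℝ)
    (hF₁ : ∀ x : Fin n → ℝ, F₁ x = (μ {y | ∀ k ∈ I, y k ≤ x k}).toReal)
    (hF₂ : ∀ x : Fin n → ℝ, F₂ x = (μ {y | ∀ k, k ∉ I → y k ≤ x k}).toReal)
    (x b : Fin n → ℝ) (hxb : ∀ i, x i ≤ b i) :
    F x ≥ (F b / (F₁ b * F₂ b)) * (F₁ x * F₂ x) := by
  classical
  -- the log of F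
  set f : (Fin n → ℝ) → ℝ := fun z => Real.log (F z) with hfdef
  have hfC : ContDiff ℝ 2 f := hC2.log fun z => (hpos z).ne'
  have hfd : Differentiable ℝ f := hfC.differentiable (by norm_num)
  have hm : ∀ x : Fin n → ℝ, ∀ i j : Fin n, i ≠ j →
      0 < deriv (fun s => deriv
            (fun t => f (Function.update (Function.update x j s) i t)) (x i)) (x j) :=
    hMTP2
  have hpd : ∀ (w : Fin n → ℝ) (i j : Fin n), i ≠ j →
      StrictMono (fun s => MTP2Aux.pd f i (Function.update w j s)) :=
    fun w i j hij => MTP2Aux.pd_strictMono hfd hm i j hij w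
  have hds : ∀ {i j : Fin n}, i ≠ j → ∀ {a a' : ℝ}, a ≤ a' → ∀ w : Fin n → ℝ,
      Monotone (fun s => f (Function.update (Function.update w j s) i a')
        - f (Function.update (Function.update w j s) i a)) :=
    fun {i j} hij {a a'} haa w => MTP2Aux.delta_slice_monotone hfd hpd hij haa w
  have hdm : ∀ (i : Fin n) {a a' : ℝ}, a ≤ a' → ∀ {w w' : Fin n → ℝ}, w ≤ w' →
      f (Function.update w i a') - f (Function.update w i a)
        ≤ f (Function.update w' i a') - f (Function.update w' i a) :=
    fun i {a a'} haa {w w'} hww => MTP2Aux.delta_monotone hds i haa hww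
  -- supermodularity of log F, transferred to F
  have hsupF : ∀ p q : Fin n → ℝ, p ≤ q →
      F (I.piecewise p q) * F (I.piecewise q p) ≤ F p * F q := by
    intro p q hpq
    have hlog := MTP2Aux.block_supermodular hdm I hpq
    rw [← Real.log_le_log_iff (mul_pos (hpos _) (hpos _)) (mul_pos (hpos _) (hpos _)),
      Real.log_mul (hpos _).ne' (hpos _).ne', Real.log_mul (hpos _).ne' (hpos _).ne']
    exact hlog
  -- limits towards the marginals
  have t₁ : ∀ z : Fin n → ℝ,
      Tendsto (fun M : ℝ => F (fun k => if k ∈ I then z k else M)) atTop (𝓝 (F₁ z)) := by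
    intro z
    rw [hF₁ z]
    have h := MTP2Aux.tendsto_marginal μ (fun k => k ∈ I) z
    convert h using 2 with M
    rw [hF]
  have t₂ : ∀ z : Fin n → ℝ,
      Tendsto (fun M : ℝ => F (fun k => if k ∉ I then z k else M)) atTop (𝓝 (F₂ z)) := by
    intro z
    rw [hF₂ z]
    have h := MTP2Aux.tendsto_marginal μ (fun k => k ∉ I) z
    convert h using 2 with M
    rw [hF]
  -- a uniform bound on x and b
  obtain ⟨C, hC⟩ := Finite.exists_le (fun k => max (x k) (b k))
  have hxC : ∀ k, x k ≤ C := fun k => (le_max_left _ _).trans (hC k)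
  have hbC : ∀ k, b k ≤ C := fun k => (le_max_right _ _).trans (hC k)
  set v' : Fin n → ℝ := fun k => if k ∈ I then b k else x k with hv'
  -- first limiting inequality : F₁ x * F v' ≤ F x * F₁ b
  have ineq1 : F₁ x * F v' ≤ F x * F₁ b := by
    refine le_of_tendsto_of_tendsto ((t₁ x).mul tendsto_const_nhds)
      (tendsto_const_nhds.mul (t₁ b)) ?_
    filter_upwards [eventually_ge_atTop C] with M hM
    have hq : x ≤ fun k => if k ∈ I then b k else M := by
      intro k
      by_cases hk : k ∈ I
      · simpa [hk] using hxb k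
      · simpa [hk] using (hxC k).trans hM
    have h := hsupF x (fun k => if k ∈ I then b k else M) hq
    have e1 : I.piecewise x (fun k => if k ∈ I then b k else M)
        = fun k => if k ∈ I then x k else M := by
      funext k
      by_cases hk : k ∈ I
      · simp [Finset.piecewise_eq_of_mem _ _ _ hk, hk]
      · simp [Finset.piecewise_eq_of_notMem _ _ _ hk, hk]
    have e2 : I.piecewise (fun k => if k ∈ I then b k else M) x = v' := by
      funext k
      by_cases hk : k ∈ I
      · simp [Finset.piecewise_eq_of_mem _ _ _ hk, hk, hv']
      · simp [Finset.piecewise_eq_of_notMem _ _ _ hk, hk, hv']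
    rw [e1, e2] at h
    exact h
  -- second limiting inequality : F b * F₂ x ≤ F v' * F₂ b
  have ineq2 : F b * F₂ x ≤ F v' * F₂ b := by
    refine le_of_tendsto_of_tendsto (tendsto_const_nhds.mul (t₂ x))
      (tendsto_const_nhds.mul (t₂ b)) ?_
    filter_upwards [eventually_ge_atTop C] with M hM
    have hq : v' ≤ fun k => if k ∉ I then b k else M := by
      intro k
      by_cases hk : k ∈ I
      · simpa [hk, hv'] using (hbC k).trans hM
      · simpa [hk, hv'] using hxb k
    have h := hsupF v' (fun k => if k ∉ I then b k else M) hq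
    have e1 : I.piecewise v' (fun k => if k ∉ I then b k else M) = b := by
      funext k
      by_cases hk : k ∈ I
      · simp [Finset.piecewise_eq_of_mem _ _ _ hk, hk, hv']
      · simp [Finset.piecewise_eq_of_notMem _ _ _ hk, hk]
    have e2 : I.piecewise (fun k => if k ∉ I then b k else M) v'
        = fun k => if k ∉ I then x k else M := by
      funext k
      by_cases hk : k ∈ I
      · simp [Finset.piecewise_eq_of_mem _ _ _ hk, hk]
      · simp [Finset.piecewise_eq_of_notMem _ _ _ hk, hk, hv']
    rw [e1, e2] at h
    exact h
  -- positivity facts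
  have hFb1 : F b ≤ F₁ b := by
    rw [hF b, hF₁ b]
    exact ENNReal.toReal_mono (measure_ne_top μ _)
      (measure_mono fun y hy k hk => hy k)
  have hFb2 : F b ≤ F₂ b := by
    rw [hF b, hF₂ b]
    exact ENNReal.toReal_mono (measure_ne_top μ _)
      (measure_mono fun y hy k _ => hy k)
  have hFx1 : F x ≤ F₁ x := by
    rw [hF x, hF₁ x]
    exact ENNReal.toReal_mono (measure_ne_top μ _)
      (measure_mono fun y hy k hk => hy k)
  have hFx2 : F x ≤ F₂ x := by
    rw [hF x, hF₂ x]
    exact ENNReal.toReal_mono (measure_ne_top μ _)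
      (measure_mono fun y hy k _ => hy k)
  have h1b : 0 < F₁ b := lt_of_lt_of_le (hpos b) hFb1
  have h2b : 0 < F₂ b := lt_of_lt_of_le (hpos b) hFb2
  have h1x : 0 < F₁ x := lt_of_lt_of_le (hpos x) hFx1
  have h2x : 0 < F₂ x := lt_of_lt_of_le (hpos x) hFx2
  have hv'pos : 0 < F v' := hpos v'
  -- conclude
  rw [ge_iff_le, div_mul_eq_mul_div, div_le_iff₀ (mul_pos h1b h2b)]
  nlinarith [mul_le_mul_of_nonneg_right ineq2 h1x.le,
    mul_le_mul_of_nonneg_right ineq1 h2b.le, hpos b, hpos x, hv'pos]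
end

section
/- Let F be a C² strict MTP₂ cdf on (0,∞)ⁿ with everywhere positive density f, and let F₁, F₂ denote the marginal cdfs corresponding to a split of coordinates into index sets I and its complement. Then r(x) := F(x)/(F₁(x₁)·F₂(x₂)) > 1 for all x ∈ (0,∞)ⁿ. -/
open MeasureTheory Filter Set Function
namespace MySplod
variable {n : ℕ}

lemma isOpen_orthant : IsOpen {x : Fin n → ℝ | ∀ i, 0 < x i} := by
  have h : {x : Fin n → ℝ | ∀ i, 0 < x i} = ⋂ i, {x | 0 < x i} := by ext y; simp
  rw [h]
  exact isOpen_iInter_of_finite fun i => isOpen_lt continuous_const (continuous_apply i)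

lemma pos_update {p : Fin n → ℝ} (hp : ∀ k, 0 < p k) {j : Fin n} {a : ℝ} (ha : 0 < a) :
    ∀ k, 0 < Function.update p j a k := by
  intro k
  rcases eq_or_ne k j with rfl | h
  · simpa using ha
  · simpa [Function.update_of_ne h] using hp k

lemma hasDerivAt_update (w : Fin n → ℝ) (j : Fin n) (τ : ℝ) :
    HasDerivAt (fun u : ℝ => Function.update w j u) (Pi.single j 1) τ := by
  have h : (fun u : ℝ => Function.update w j u)
      = fun u : ℝ => Function.update w j 0 + u • (Pi.single j 1 : Fin n → ℝ) := by
    funext u k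
    rcases eq_or_ne k j with rfl | hk
    · simp
    · simp [Function.update_of_ne hk, Pi.single_eq_of_ne hk]
  rw [h]
  simpa using ((hasDerivAt_id τ).smul_const (Pi.single j 1 : Fin n → ℝ)).const_add (Function.update w j 0)

lemma diffAt_slice (A : (Fin n → ℝ) → ℝ)
    (hd : ∀ p : Fin n → ℝ, (∀ k, 0 < p k) → DifferentiableAt ℝ A p)
    {w : Fin n → ℝ} {j : Fin n} {u : ℝ}
    (hw : ∀ k, 0 < Function.update w j u k) :
    DifferentiableAt ℝ (fun u => A (Function.update w j u)) u :=
  (hd _ hw).comp u (hasDerivAt_update w j u).differentiableAt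

lemma pair_lt (A : (Fin n → ℝ) → ℝ)
    (hd : ∀ p : Fin n → ℝ, (∀ k, 0 < p k) → DifferentiableAt ℝ A p)
    (hM : ∀ p : Fin n → ℝ, (∀ k, 0 < p k) → ∀ i j : Fin n, i ≠ j →
      0 < deriv (fun s => deriv
            (fun t => A (Function.update (Function.update p j s) i t)) (p i)) (p j))
    (p : Fin n → ℝ) (hp : ∀ k, 0 < p k) (i j : Fin n) (hij : i ≠ j)
    {s s' t t' : ℝ} (hs : 0 < s) (hss' : s < s') (ht : 0 < t) (htt' : t < t') :
    A (update (update p i s) j t') - A (update (update p i s) j t) <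
      A (update (update p i s') j t') - A (update (update p i s') j t) := by
  have hpt : ∀ σ u : ℝ, 0 < σ → 0 < u → ∀ k, 0 < update (update p i σ) j u k :=
    fun σ u hσ hu => pos_update (pos_update hp hσ) hu
  have hΦpos : ∀ τ σ : ℝ, 0 < τ → 0 < σ →
      0 < deriv (fun σ' => deriv (fun u => A (update (update p i σ') j u)) τ) σ := by
    intro τ σ hτ hσ
    set q := update (update p i σ) j τ with hq
    have hqpos : ∀ k, 0 < q k := hpt σ τ hσ hτ
    have h := hM q hqpos j i hij.symm
    have hqj : q j = τ := by simp [hq]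
    have hqi : q i = σ := by simp [hq, Function.update_of_ne hij]
    have hfun : (fun s => deriv (fun t => A (update (update q i s) j t)) (q j))
        = fun σ' => deriv (fun u => A (update (update p i σ') j u)) τ := by
      funext σ'
      rw [hqj]
      congr 1
      funext u
      congr 1
      funext k
      rcases eq_or_ne k j with rfl | hkj
      · simp
      · rcases eq_or_ne k i with rfl | hki
        · simp [Function.update_of_ne hkj]
        · simp [hq, Function.update_of_ne hkj, Function.update_of_ne hki]
    rw [hfun, hqi] at h
    exact h
  have hΦmono : ∀ τ : ℝ, 0 < τ → StrictMonoOn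
      (fun σ => deriv (fun u => A (update (update p i σ) j u)) τ) (Ioi (0:ℝ)) := by
    intro τ hτ
    apply strictMonoOn_of_deriv_pos (convex_Ioi 0)
    · intro σ hσ
      exact (differentiableAt_of_deriv_ne_zero
        (ne_of_gt (hΦpos τ σ hτ hσ))).continuousAt.continuousWithinAt
    · intro σ hσ
      rw [interior_Ioi] at hσ
      exact hΦpos τ σ hτ hσ
  have hGmono : StrictMonoOn
      (fun u : ℝ => A (update (update p i s') j u) - A (update (update p i s) j u))
      (Ioi (0:ℝ)) := by
    apply strictMonoOn_of_deriv_pos (convex_Ioi 0)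
    · intro u hu
      exact (((diffAt_slice A hd (hpt s' u (hs.trans hss') hu)).sub
        (diffAt_slice A hd (hpt s u hs hu))).continuousAt).continuousWithinAt
    · intro u hu
      rw [interior_Ioi] at hu
      have d1 := diffAt_slice A hd (hpt s' u (hs.trans hss') hu)
      have d2 := diffAt_slice A hd (hpt s u hs hu)
      rw [deriv_fun_sub d1 d2]
      have := hΦmono u hu (mem_Ioi.mpr hs) (mem_Ioi.mpr (hs.trans hss')) hss'
      simp only at this
      linarith
  have h1 := hGmono (mem_Ioi.mpr ht) (mem_Ioi.mpr (ht.trans htt')) htt'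
  simp only at h1
  linarith

lemma pair_le (A : (Fin n → ℝ) → ℝ)
    (hd : ∀ p : Fin n → ℝ, (∀ k, 0 < p k) → DifferentiableAt ℝ A p)
    (hM : ∀ p : Fin n → ℝ, (∀ k, 0 < p k) → ∀ i j : Fin n, i ≠ j →
      0 < deriv (fun s => deriv
            (fun t => A (Function.update (Function.update p j s) i t)) (p i)) (p j))
    (p : Fin n → ℝ) (hp : ∀ k, 0 < p k) (i j : Fin n) (hij : i ≠ j)
    {s s' t t' : ℝ} (hs : 0 < s) (hss' : s ≤ s') (ht : 0 < t) (htt' : t ≤ t') :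
    A (update (update p i s) j t') - A (update (update p i s) j t) ≤
      A (update (update p i s') j t') - A (update (update p i s') j t) := by
  rcases eq_or_lt_of_le hss' with rfl | hlt
  · exact le_refl _
  rcases eq_or_lt_of_le htt' with rfl | hlt'
  · simp
  · exact (pair_lt A hd hM p hp i j hij hs hlt ht hlt').le

def mS (S : Finset (Fin n)) (q p : Fin n → ℝ) : Fin n → ℝ := fun k => if k ∈ S then q k else p k
lemma mS_empty (q p : Fin n → ℝ) : mS ∅ q p = p := funext fun k => by simp [mS]
lemma mS_self (S : Finset (Fin n)) (q : Fin n → ℝ) : mS S q q = q := funext fun k => by simp [mS]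
lemma mS_univ (q p : Fin n → ℝ) : mS Finset.univ q p = q := funext fun k => by simp [mS]
lemma mS_insert (i : Fin n) (S : Finset (Fin n)) (q p : Fin n → ℝ) :
    mS (insert i S) q p = Function.update (mS S q p) i (q i) := by
  funext k
  rcases eq_or_ne k i with rfl | h
  · simp [mS]
  · simp [mS, Function.update_of_ne h, h]
lemma mS_pos {q p : Fin n → ℝ} (hq : ∀ k, 0 < q k) (hp : ∀ k, 0 < p k) (S : Finset (Fin n)) :
    ∀ k, 0 < mS S q p k := by
  intro k; by_cases h : k ∈ S <;> simp [mS, h, hq k, hp k]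
lemma mS_update_notmem {i : Fin n} {S : Finset (Fin n)} (h : i ∉ S) (q p : Fin n → ℝ) (a : ℝ) :
    Function.update (mS S q p) i a = mS S q (Function.update p i a) := by
  funext k
  rcases eq_or_ne k i with rfl | hk
  · simp [mS, h]
  · simp [mS, Function.update_of_ne hk]

lemma inc_mono_aux (A : (Fin n → ℝ) → ℝ)
    (hd : ∀ p : Fin n → ℝ, (∀ k, 0 < p k) → DifferentiableAt ℝ A p)
    (hM : ∀ p : Fin n → ℝ, (∀ k, 0 < p k) → ∀ i j : Fin n, i ≠ j →
      0 < deriv (fun s => deriv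
            (fun t => A (Function.update (Function.update p j s) i t)) (p i)) (p j))
    {p q : Fin n → ℝ} (hp : ∀ k, 0 < p k) (hq : ∀ k, 0 < q k)
    (hpq : ∀ k, p k ≤ q k) (j : Fin n) {t t' : ℝ} (ht : 0 < t) (htt' : t ≤ t') :
    ∀ S : Finset (Fin n),
      A (update p j t') - A (update p j t) ≤
        A (update (mS S q p) j t') - A (update (mS S q p) j t) := by
  intro S
  induction S using Finset.induction_on with
  | empty => rw [mS_empty]
  | @insert i S hiS ih =>
    rw [mS_insert]
    have hrpos : ∀ k, 0 < mS S q p k := mS_pos hq hp S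
    have hri : mS S q p i = p i := by simp [mS, hiS]
    rcases eq_or_ne i j with rfl | hij
    · simp only [Function.update_idem]
      exact ih
    · have step := pair_le A hd hM (mS S q p) hrpos i j hij (hp i) (hpq i) ht htt'
      have hrr : Function.update (mS S q p) i (p i) = mS S q p := by
        rw [← hri]; exact Function.update_eq_self i (mS S q p)
      rw [hrr] at step
      exact le_trans ih step

lemma inc_mono (A : (Fin n → ℝ) → ℝ)
    (hd : ∀ p : Fin n → ℝ, (∀ k, 0 < p k) → DifferentiableAt ℝ A p)
    (hM : ∀ p : Fin n → ℝ, (∀ k, 0 < p k) → ∀ i j : Fin n, i ≠ j →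
      0 < deriv (fun s => deriv
            (fun t => A (Function.update (Function.update p j s) i t)) (p i)) (p j))
    {p q : Fin n → ℝ} (hp : ∀ k, 0 < p k) (hq : ∀ k, 0 < q k)
    (hpq : ∀ k, p k ≤ q k) (j : Fin n) {t t' : ℝ} (ht : 0 < t) (htt' : t ≤ t') :
    A (update p j t') - A (update p j t) ≤ A (update q j t') - A (update q j t) := by
  have h := inc_mono_aux A hd hM hp hq hpq j ht htt' Finset.univ
  rwa [mS_univ] at h

lemma inc_strict (A : (Fin n → ℝ) → ℝ)
    (hd : ∀ p : Fin n → ℝ, (∀ k, 0 < p k) → DifferentiableAt ℝ A p)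
    (hM : ∀ p : Fin n → ℝ, (∀ k, 0 < p k) → ∀ i j : Fin n, i ≠ j →
      0 < deriv (fun s => deriv
            (fun t => A (Function.update (Function.update p j s) i t)) (p i)) (p j))
    {p q : Fin n → ℝ} (hp : ∀ k, 0 < p k) (hq : ∀ k, 0 < q k)
    (hpq : ∀ k, p k ≤ q k) {j j' : Fin n} (hjj' : j' ≠ j) (hlt : p j' < q j')
    {t t' : ℝ} (ht : 0 < t) (htt' : t < t') :
    A (update p j t') - A (update p j t) < A (update q j t') - A (update q j t) := by
  have hmpos : ∀ k, 0 < Function.update q j' (p j') k := pos_update hq (hp j')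
  have hpm : ∀ k, p k ≤ Function.update q j' (p j') k := by
    intro k
    rcases eq_or_ne k j' with rfl | h
    · simp
    · rw [Function.update_of_ne h]; exact hpq k
  have h1 := inc_mono A hd hM hp hmpos hpm j ht htt'.le
  have step := pair_lt A hd hM q hq j' j hjj' (hp j') hlt ht htt'
  rw [Function.update_eq_self j' q] at step
  exact lt_of_le_of_lt h1 step


lemma block_mono (A : (Fin n → ℝ) → ℝ)
    (hd : ∀ p : Fin n → ℝ, (∀ k, 0 < p k) → DifferentiableAt ℝ A p)
    (hM : ∀ p : Fin n → ℝ, (∀ k, 0 < p k) → ∀ i j : Fin n, i ≠ j →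
      0 < deriv (fun s => deriv
            (fun t => A (Function.update (Function.update p j s) i t)) (p i)) (p j)) :
    ∀ (T : Finset (Fin n)) {y z c c' : Fin n → ℝ},
    (∀ k, 0 < y k) → (∀ k, y k ≤ z k) → (∀ k, 0 < c k) → (∀ k, c k ≤ c' k) →
    A (mS T z c) - A (mS T y c) ≤ A (mS T z c') - A (mS T y c') := by
  intro T
  induction T using Finset.induction_on with
  | empty => intro y z c c' _ _ _ _; rw [mS_empty, mS_empty, mS_empty, mS_empty]; simp
  | @insert i T hiT ih =>
    intro y z c c' hy hyz hc hcc'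
    have hz : ∀ k, 0 < z k := fun k => lt_of_lt_of_le (hy k) (hyz k)
    have hc' : ∀ k, 0 < c' k := fun k => lt_of_lt_of_le (hc k) (hcc' k)
    have hFB : A (update (mS T z c) i (z i)) - A (update (mS T y c) i (z i)) ≤
               A (update (mS T z c') i (z i)) - A (update (mS T y c') i (z i)) := by
      rw [mS_update_notmem hiT, mS_update_notmem hiT, mS_update_notmem hiT, mS_update_notmem hiT]
      refine ih hy hyz (pos_update hc (hz i)) ?_
      intro k
      rcases eq_or_ne k i with rfl | h
      · simp
      · rw [Function.update_of_ne h, Function.update_of_ne h]; exact hcc' k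
    have hSB : A (update (mS T y c) i (z i)) - A (update (mS T y c) i (y i)) ≤
               A (update (mS T y c') i (z i)) - A (update (mS T y c') i (y i)) := by
      refine inc_mono A hd hM (mS_pos hy hc T) (mS_pos hy hc' T) ?_ i (hy i) (hyz i)
      intro k
      by_cases h : k ∈ T
      · simp [mS, h]
      · simp [mS, h]; exact hcc' k
    rw [mS_insert, mS_insert, mS_insert, mS_insert]
    linarith

lemma block_strict (A : (Fin n → ℝ) → ℝ)
    (hd : ∀ p : Fin n → ℝ, (∀ k, 0 < p k) → DifferentiableAt ℝ A p)
    (hM : ∀ p : Fin n → ℝ, (∀ k, 0 < p k) → ∀ i j : Fin n, i ≠ j →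
      0 < deriv (fun s => deriv
            (fun t => A (Function.update (Function.update p j s) i t)) (p i)) (p j))
    (Ifin : Finset (Fin n)) (hne : Ifin.Nonempty) {j' : Fin n} (hj' : j' ∉ Ifin)
    {y z c c' : Fin n → ℝ} (hy : ∀ k, 0 < y k) (hyz : ∀ k, y k < z k)
    (hc : ∀ k, 0 < c k) (hcc' : ∀ k, c k < c' k) :
    A (mS Ifin z c) - A (mS Ifin y c) < A (mS Ifin z c') - A (mS Ifin y c') := by
  obtain ⟨i, hi⟩ := hne
  have hins : Ifin = insert i (Ifin.erase i) := (Finset.insert_erase hi).symm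
  set T := Ifin.erase i with hT
  have hiT : i ∉ T := Finset.notMem_erase i Ifin
  have hz : ∀ k, 0 < z k := fun k => lt_of_lt_of_le (hy k) (hyz k).le
  have hc' : ∀ k, 0 < c' k := fun k => lt_of_lt_of_le (hc k) (hcc' k).le
  have hj'i : j' ≠ i := fun h => hj' (h ▸ hi)
  have hj'T : j' ∉ T := fun h => hj' (Finset.mem_of_mem_erase h)
  have hFB : A (update (mS T z c) i (z i)) - A (update (mS T y c) i (z i)) ≤
             A (update (mS T z c') i (z i)) - A (update (mS T y c') i (z i)) := by
    rw [mS_update_notmem hiT, mS_update_notmem hiT, mS_update_notmem hiT, mS_update_notmem hiT]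
    refine block_mono A hd hM T hy (fun k => (hyz k).le) (pos_update hc (hz i)) ?_
    intro k
    rcases eq_or_ne k i with rfl | h
    · simp
    · rw [Function.update_of_ne h, Function.update_of_ne h]; exact (hcc' k).le
  have hSB : A (update (mS T y c) i (z i)) - A (update (mS T y c) i (y i)) <
             A (update (mS T y c') i (z i)) - A (update (mS T y c') i (y i)) := by
    refine inc_strict A hd hM (mS_pos hy hc T) (mS_pos hy hc' T) ?_ hj'i ?_ (hy i) (hyz i)
    · intro k
      by_cases h : k ∈ T
      · simp [mS, h]
      · simp [mS, h]; exact (hcc' k).le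
    · simp [mS, hj'T]; exact hcc' j'
  rw [hins, mS_insert, mS_insert, mS_insert, mS_insert]
  linarith

end MySplod


open MeasureTheory Filter Set

theorem mtp2_implies_strict_splod
    (n : ℕ) (μ : Measure (Fin n → ℝ)) [IsProbabilityMeasure μ]
    (f : (Fin n → ℝ) → ℝ)
    (hμ : μ = volume.withDensity (fun y => ENNReal.ofReal (f y)))
    (hfpos : ∀ y : Fin n → ℝ, (∀ i, 0 < y i) → 0 < f y)
    (hfsupp : ∀ y : Fin n → ℝ, ¬ (∀ i, 0 < y i) → f y = 0)
    (F : (Fin n → ℝ) → ℝ)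
    (hF : ∀ x : Fin n → ℝ, F x = (μ {y | ∀ i, y i ≤ x i}).toReal)
    (hC2 : ContDiffOn ℝ 2 F {x | ∀ i, 0 < x i})
    (hMTP2 : ∀ x : Fin n → ℝ, (∀ i, 0 < x i) → ∀ i j : Fin n, i ≠ j →
      0 < deriv (fun s => deriv
            (fun t => Real.log (F (Function.update (Function.update x j s) i t)))
            (x i)) (x j))
    (I : Finset (Fin n)) (hI : I.Nonempty) (hIp : I ≠ Finset.univ)
    (F₁ F₂ : (Fin n → ℝ) → ℝ)
    (hF₁ : ∀ x : Fin n → ℝ, F₁ x = (μ {y | ∀ k ∈ I, y k ≤ x k}).toReal)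
    (hF₂ : ∀ x : Fin n → ℝ, F₂ x = (μ {y | ∀ k, k ∉ I → y k ≤ x k}).toReal)
    (x : Fin n → ℝ) (hx : ∀ i, 0 < x i) :
    1 < F x / (F₁ x * F₂ x) := by
  classical
  obtain ⟨i₀, hi₀⟩ := hI
  obtain ⟨j₀, hj₀⟩ : ∃ j, j ∉ I := by
    by_contra h
    push_neg at h
    exact hIp (Finset.eq_univ_iff_forall.mpr h)
  have hij₀ : i₀ ≠ j₀ := fun h => hj₀ (h ▸ hi₀)
  -- basic facts about F
  have hFnonneg : ∀ y, 0 ≤ F y := fun y => by rw [hF]; exact ENNReal.toReal_nonneg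
  have hFmono : ∀ y z : Fin n → ℝ, (∀ k, y k ≤ z k) → F y ≤ F z := by
    intro y z h
    rw [hF, hF]
    exact ENNReal.toReal_mono (measure_ne_top μ _)
      (measure_mono fun w hw k => le_trans (hw k) (h k))
  have hFpos : ∀ p : Fin n → ℝ, (∀ k, 0 < p k) → 0 < F p := by
    intro p hp
    rcases (hFnonneg p).lt_or_eq with h | h
    · exact h
    exfalso
    have hzero : ∀ y : Fin n → ℝ, (∀ k, y k < p k) → Real.log (F y) = 0 := by
      intro y hy
      have h1 : F y ≤ F p := hFmono y p fun k => (hy k).le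
      have h2 : F y = 0 := le_antisymm (h ▸ h1) (hFnonneg y)
      rw [h2, Real.log_zero]
    set p₀ : Fin n → ℝ := fun k => p k / 2 with hp₀
    have hp₀pos : ∀ k, 0 < p₀ k := fun k => by simp [hp₀]; exact hp k
    have hp₀lt : ∀ k, p₀ k < p k := fun k => by
      simp only [hp₀]; exact half_lt_self (hp k)
    have hmtp := hMTP2 p₀ hp₀pos i₀ j₀ hij₀
    have houter : (fun s => deriv
        (fun t => Real.log (F (Function.update (Function.update p₀ j₀ s) i₀ t)))
        (p₀ i₀)) =ᶠ[nhds (p₀ j₀)] (fun _ => (0:ℝ)) := by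
      filter_upwards [Iio_mem_nhds (hp₀lt j₀)] with s hs
      have hev : (fun t => Real.log (F (Function.update (Function.update p₀ j₀ s) i₀ t)))
          =ᶠ[nhds (p₀ i₀)] (fun _ => (0:ℝ)) := by
        filter_upwards [Iio_mem_nhds (hp₀lt i₀)] with t htl
        apply hzero
        intro k
        rcases eq_or_ne k i₀ with rfl | hk1
        · simpa using htl
        · rw [Function.update_of_ne hk1]
          rcases eq_or_ne k j₀ with rfl | hk2
          · simpa using hs
          · rw [Function.update_of_ne hk2]; exact hp₀lt k
      rw [hev.deriv_eq, deriv_const]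
    rw [houter.deriv_eq, deriv_const] at hmtp
    exact lt_irrefl 0 hmtp
  -- differentiability of log ∘ F
  have hd : ∀ p : Fin n → ℝ, (∀ k, 0 < p k) →
      DifferentiableAt ℝ (fun y => Real.log (F y)) p := by
    intro p hp
    have h1 : DifferentiableAt ℝ F p :=
      (hC2.contDiffAt (MySplod.isOpen_orthant.mem_nhds hp)).differentiableAt two_ne_zero
    exact h1.log (ne_of_gt (hFpos p hp))
  have hM : ∀ p : Fin n → ℝ, (∀ k, 0 < p k) → ∀ i j : Fin n, i ≠ j →
      0 < deriv (fun s => deriv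
            (fun t => (fun y => Real.log (F y))
              (Function.update (Function.update p j s) i t)) (p i)) (p j) :=
    fun p hp i j hij => hMTP2 p hp i j hij
  -- the sequence of corners
  set b : ℕ → (Fin n → ℝ) := fun m k => x k + m with hb
  have hbpos : ∀ m : ℕ, ∀ k, 0 < b m k := fun m k => by
    show 0 < x k + (m:ℝ)
    have h1 := hx k
    have h2 : (0:ℝ) ≤ (m:ℝ) := Nat.cast_nonneg m
    linarith
  have hxb1 : ∀ k, x k < b 1 k := fun k => by simp [hb]
  have hxbm : ∀ m : ℕ, ∀ k, x k ≤ b m k := fun m k => by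
    show x k ≤ x k + (m:ℝ)
    have : (0:ℝ) ≤ (m:ℝ) := Nat.cast_nonneg m
    linarith
  have hb1m : ∀ m : ℕ, 1 ≤ m → ∀ k, b 1 k ≤ b m k := by
    intro m hm k
    show x k + ((1:ℕ):ℝ) ≤ x k + (m:ℝ)
    have : (1:ℝ) ≤ (m:ℝ) := by exact_mod_cast hm
    push_cast
    linarith
  -- monotone inequality chain : D 1 ≤ D m
  have Dmono : ∀ m : ℕ, 1 ≤ m →
      Real.log (F (MySplod.mS I (b 1) (b 1))) + Real.log (F x)
        - Real.log (F (MySplod.mS I x (b 1))) - Real.log (F (MySplod.mS I (b 1) x)) ≤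
      Real.log (F (MySplod.mS I (b m) (b m))) + Real.log (F x)
        - Real.log (F (MySplod.mS I x (b m))) - Real.log (F (MySplod.mS I (b m) x)) := by
    intro m hm
    have t1 : Real.log (F (MySplod.mS I (b 1) (b 1))) - Real.log (F (MySplod.mS I x (b 1))) ≤
        Real.log (F (MySplod.mS I (b 1) (b m))) - Real.log (F (MySplod.mS I x (b m))) :=
      MySplod.block_mono (fun y => Real.log (F y)) hd hM I hx (fun k => (hxb1 k).le)
        (hbpos 1) (hb1m m hm)
    have t2 : Real.log (F (MySplod.mS I (b m) x)) - Real.log (F (MySplod.mS I (b 1) x)) ≤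
        Real.log (F (MySplod.mS I (b m) (b m))) - Real.log (F (MySplod.mS I (b 1) (b m))) :=
      MySplod.block_mono (fun y => Real.log (F y)) hd hM I (hbpos 1) (hb1m m hm)
        hx (hxbm m)
    linarith
  have Dpos : 0 < Real.log (F (MySplod.mS I (b 1) (b 1))) + Real.log (F x)
        - Real.log (F (MySplod.mS I x (b 1))) - Real.log (F (MySplod.mS I (b 1) x)) := by
    have t : Real.log (F (MySplod.mS I (b 1) x)) - Real.log (F (MySplod.mS I x x)) <
        Real.log (F (MySplod.mS I (b 1) (b 1))) - Real.log (F (MySplod.mS I x (b 1))) :=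
      MySplod.block_strict (fun y => Real.log (F y)) hd hM I ⟨i₀, hi₀⟩ hj₀ hx hxb1 hx hxb1
    rw [MySplod.mS_self] at t
    linarith
  -- limits
  have keylim : ∀ (g : ℕ → Set (Fin n → ℝ)) (L : Set (Fin n → ℝ)), Monotone g →
      (⋃ m, g m) = L →
      Tendsto (fun m => (μ (g m)).toReal) atTop (nhds ((μ L).toReal)) := by
    intro g L hmono hU
    have h1 : Tendsto (fun m => μ (g m)) atTop (nhds (μ (⋃ m, g m))) :=
      tendsto_measure_iUnion_atTop hmono
    rw [hU] at h1
    exact (ENNReal.tendsto_toReal (measure_ne_top μ L)).comp h1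
  have hsup : ∀ y : Fin n → ℝ, ∃ m : ℕ, ∀ k, y k - x k ≤ m := by
    intro y
    obtain ⟨m, hm⟩ := exists_nat_ge (Finset.univ.sup' ⟨i₀, Finset.mem_univ i₀⟩
      fun k => y k - x k)
    exact ⟨m, fun k => le_trans (Finset.le_sup' (fun k => y k - x k) (Finset.mem_univ k)) hm⟩
  have limb : Tendsto (fun m : ℕ => F (MySplod.mS I (b m) (b m))) atTop (nhds 1) := by
    have heq : (fun m : ℕ => F (MySplod.mS I (b m) (b m)))
        = fun m : ℕ => (μ {y | ∀ i, y i ≤ b m i}).toReal := by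
      funext m
      rw [MySplod.mS_self, hF]
    have hmono : Monotone (fun m : ℕ => {y : Fin n → ℝ | ∀ i, y i ≤ b m i}) := by
      intro a a' haa' y hy i
      refine le_trans (hy i) ?_
      simp only [hb]
      have : (a:ℝ) ≤ (a':ℝ) := by exact_mod_cast haa'
      linarith
    have hun : (⋃ m : ℕ, {y : Fin n → ℝ | ∀ i, y i ≤ b m i}) = univ := by
      ext y
      simp only [mem_iUnion, mem_univ, iff_true, mem_setOf_eq]
      obtain ⟨m, hm⟩ := hsup y
      exact ⟨m, fun k => by have := hm k; simp only [hb]; linarith⟩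
    have h := keylim _ _ hmono hun
    rw [measure_univ] at h
    simpa [heq] using h
  have limu : Tendsto (fun m : ℕ => F (MySplod.mS I x (b m))) atTop (nhds (F₁ x)) := by
    have heq : (fun m : ℕ => F (MySplod.mS I x (b m)))
        = fun m : ℕ => (μ {y | ∀ i, y i ≤ MySplod.mS I x (b m) i}).toReal := by
      funext m; rw [hF]
    have hmono : Monotone (fun m : ℕ => {y : Fin n → ℝ | ∀ i, y i ≤ MySplod.mS I x (b m) i}) := by
      intro a a' haa' y hy i
      refine le_trans (hy i) ?_
      by_cases h : i ∈ I
      · simp [MySplod.mS, h]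
      · simp only [MySplod.mS, h, if_false, hb]
        have : (a:ℝ) ≤ (a':ℝ) := by exact_mod_cast haa'
        linarith
    have hun : (⋃ m : ℕ, {y : Fin n → ℝ | ∀ i, y i ≤ MySplod.mS I x (b m) i})
        = {y | ∀ k ∈ I, y k ≤ x k} := by
      ext y
      simp only [mem_iUnion, mem_setOf_eq]
      constructor
      · rintro ⟨m, hm⟩ k hk
        have := hm k
        simpa [MySplod.mS, hk] using this
      · intro hy
        obtain ⟨m, hm⟩ := hsup y
        refine ⟨m, fun k => ?_⟩
        by_cases h : k ∈ I
        · simpa [MySplod.mS, h] using hy k h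
        · simp only [MySplod.mS, h, if_false, hb]
          have := hm k; linarith
    have h := keylim _ _ hmono hun
    rw [heq, hF₁]
    exact h
  have limv : Tendsto (fun m : ℕ => F (MySplod.mS I (b m) x)) atTop (nhds (F₂ x)) := by
    have heq : (fun m : ℕ => F (MySplod.mS I (b m) x))
        = fun m : ℕ => (μ {y | ∀ i, y i ≤ MySplod.mS I (b m) x i}).toReal := by
      funext m; rw [hF]
    have hmono : Monotone (fun m : ℕ => {y : Fin n → ℝ | ∀ i, y i ≤ MySplod.mS I (b m) x i}) := by
      intro a a' haa' y hy i
      refine le_trans (hy i) ?_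
      by_cases h : i ∈ I
      · simp only [MySplod.mS, h, if_true, hb]
        have : (a:ℝ) ≤ (a':ℝ) := by exact_mod_cast haa'
        linarith
      · simp [MySplod.mS, h]
    have hun : (⋃ m : ℕ, {y : Fin n → ℝ | ∀ i, y i ≤ MySplod.mS I (b m) x i})
        = {y | ∀ k, k ∉ I → y k ≤ x k} := by
      ext y
      simp only [mem_iUnion, mem_setOf_eq]
      constructor
      · rintro ⟨m, hm⟩ k hk
        have := hm k
        simpa [MySplod.mS, hk] using this
      · intro hy
        obtain ⟨m, hm⟩ := hsup y
        refine ⟨m, fun k => ?_⟩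
        by_cases h : k ∈ I
        · simp only [MySplod.mS, h, if_true, hb]
          have := hm k; linarith
        · simpa [MySplod.mS, h] using hy k h
    have h := keylim _ _ hmono hun
    rw [heq, hF₂]
    exact h
  -- positivity of marginals
  have hF1pos : 0 < F₁ x := by
    refine lt_of_lt_of_le (hFpos x hx) ?_
    rw [hF, hF₁]
    exact ENNReal.toReal_mono (measure_ne_top μ _)
      (measure_mono fun y hy k hk => hy k)
  have hF2pos : 0 < F₂ x := by
    refine lt_of_lt_of_le (hFpos x hx) ?_
    rw [hF, hF₂]
    exact ENNReal.toReal_mono (measure_ne_top μ _)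
      (measure_mono fun y hy k hk => hy k)
  -- combine limits
  have limD : Tendsto (fun m : ℕ =>
      Real.log (F (MySplod.mS I (b m) (b m))) + Real.log (F x)
        - Real.log (F (MySplod.mS I x (b m))) - Real.log (F (MySplod.mS I (b m) x))) atTop
      (nhds (0 + Real.log (F x) - Real.log (F₁ x) - Real.log (F₂ x))) := by
    refine Tendsto.sub (Tendsto.sub (Tendsto.add ?_ tendsto_const_nhds) ?_) ?_
    · have h := (Real.continuousAt_log (by norm_num : (1:ℝ) ≠ 0)).tendsto.comp limb
      simpa [Function.comp_def] using h
    · exact (Real.continuousAt_log (ne_of_gt hF1pos)).tendsto.comp limu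
    · exact (Real.continuousAt_log (ne_of_gt hF2pos)).tendsto.comp limv
  have hDlim : Real.log (F (MySplod.mS I (b 1) (b 1))) + Real.log (F x)
        - Real.log (F (MySplod.mS I x (b 1))) - Real.log (F (MySplod.mS I (b 1) x)) ≤
      0 + Real.log (F x) - Real.log (F₁ x) - Real.log (F₂ x) :=
    ge_of_tendsto limD (eventually_atTop.mpr ⟨1, Dmono⟩)
  have hkey : Real.log (F₁ x) + Real.log (F₂ x) < Real.log (F x) := by linarith
  have hprod : F₁ x * F₂ x < F x := by
    have h1 : Real.log (F₁ x * F₂ x) = Real.log (F₁ x) + Real.log (F₂ x) :=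
      Real.log_mul (ne_of_gt hF1pos) (ne_of_gt hF2pos)
    have h2 : Real.log (F₁ x * F₂ x) < Real.log (F x) := by rw [h1]; exact hkey
    exact (Real.log_lt_log_iff (mul_pos hF1pos hF2pos) (hFpos x hx)).mp h2
  exact (one_lt_div (mul_pos hF1pos hF2pos)).mpr hprod
end
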